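/- Let s ∈ (1,2]. There exist constants c = c(s) > 0 and C = C(s) > 0 such that for every L ≥ 1 and every Borel probability measure ρ on [0,1)² satisfying ρ(B(x,r)) ≤ L·r^s for all x ∈ ℝ² and r > 0, there exist axis-parallel squares Q, Q₁, Q₂ ⊆ ℝ² with Q₁ ⊆ Q, Q₂ ⊆ Q, ρ(Q₁) ≥ L^{−C}, ρ(Q₂) ≥ L^{−C}, and dist(Q₁, Q₂) ≥ c·λ(Q), where λ(Q) denotes the side length of Q. -/

import Mathlib

open MeasureTheory
open scoped ENNReal
set_option maxHeartbeats 1000000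

/-- The closed axis-parallel square with lower-left corner `z` and side length `l`. -/
def square (z : EuclideanSpace ℝ (Fin 2)) (l : ℝ) : Set (EuclideanSpace ℝ (Fin 2)) :=
  {x | ∀ i, z i ≤ x i ∧ x i ≤ z i + l}

/-- The unit cube `[0,1)²`. -/
def unitBox : Set (EuclideanSpace ℝ (Fin 2)) := {x | ∀ i, 0 ≤ x i ∧ x i < 1}

lemma coord_le_dist (x y : EuclideanSpace ℝ (Fin 2)) (i : Fin 2) : |x i - y i| ≤ dist x y := by
  rw [EuclideanSpace.dist_eq]
  have h1 : |x i - y i| = Real.sqrt (dist (x i) (y i) ^ 2) := by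
    rw [Real.sqrt_sq_eq_abs, Real.dist_eq, abs_abs]
  rw [h1]
  apply Real.sqrt_le_sqrt
  exact Finset.single_le_sum (f := fun j => dist (x j) (y j) ^ 2)
    (fun j _ => sq_nonneg _) (Finset.mem_univ i)

lemma dist_le_coords (x y : EuclideanSpace ℝ (Fin 2)) (t : ℝ)
    (h : ∀ i, |x i - y i| ≤ t) : dist x y ≤ 3/2 * t := by
  have ht : 0 ≤ t := le_trans (abs_nonneg _) (h 0)
  rw [EuclideanSpace.dist_eq]
  have h2 : ∑ i, dist (x i) (y i) ^ 2 ≤ 2 * t ^ 2 := by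
    rw [Fin.sum_univ_two]
    have h0 := h 0; have h1 := h 1
    rw [Real.dist_eq, Real.dist_eq]
    nlinarith [abs_nonneg (x 0 - y 0), abs_nonneg (x 1 - y 1), sq_abs (x 0 - y 0), sq_abs (x 1 - y 1)]
  calc Real.sqrt (∑ i, dist (x i) (y i) ^ 2) ≤ Real.sqrt ((3/2*t)^2) := by
        apply Real.sqrt_le_sqrt; nlinarith
    _ = 3/2 * t := Real.sqrt_sq (by linarith)

lemma grid1 (a h : ℝ) (N : ℕ) (hh : 0 < h) (hN : 0 < N) (t : ℝ) (h1 : a ≤ t)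
    (h2 : t ≤ a + N * h) : ∃ m < N, a + m * h ≤ t ∧ t ≤ a + m * h + h := by
  set m := min (N - 1) ⌊(t - a) / h⌋₊ with hm
  refine ⟨m, ?_, ?_, ?_⟩
  · have : m ≤ N - 1 := min_le_left _ _
    omega
  · have hm1 : (m : ℝ) ≤ (t - a) / h := by
      have : m ≤ ⌊(t - a) / h⌋₊ := min_le_right _ _
      calc (m:ℝ) ≤ (⌊(t - a) / h⌋₊ : ℝ) := by exact_mod_cast this
        _ ≤ (t - a)/h := Nat.floor_le (div_nonneg (by linarith) hh.le)
    have := (le_div_iff₀ hh).mp hm1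
    linarith
  · rcases le_or_gt (⌊(t - a) / h⌋₊) (N - 1) with hc | hc
    · have hme : m = ⌊(t - a) / h⌋₊ := min_eq_right hc
      have := Nat.lt_floor_add_one ((t - a) / h)
      rw [← hme] at this
      have := (div_lt_iff₀ hh).mp this
      linarith
    · have hme : m = N - 1 := min_eq_left (le_of_lt hc)
      have : (m:ℝ) + 1 = N := by
        rw [hme]; push_cast [Nat.cast_sub hN]; ring
      nlinarith

lemma measure_pigeonhole {ι : Type*} (ρ : Measure (EuclideanSpace ℝ (Fin 2))) (F : Finset ι)
    (hF : F.Nonempty) (U : ι → Set (EuclideanSpace ℝ (Fin 2))) (t : Set (EuclideanSpace ℝ (Fin 2)))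
    (h : t ⊆ ⋃ i ∈ F, U i) : ∃ i ∈ F, ρ t ≤ F.card * ρ (t ∩ U i) := by
  obtain ⟨i₀, hi₀, hmax⟩ := F.exists_max_image (fun i => ρ (t ∩ U i)) hF
  refine ⟨i₀, hi₀, ?_⟩
  calc ρ t ≤ ρ (⋃ i ∈ F, t ∩ U i) := by
        apply measure_mono; intro x hx
        obtain ⟨T, ⟨i, rfl⟩, hT2⟩ := h hx
        simp only [Set.mem_iUnion] at hT2 ⊢
        obtain ⟨hiF, hxU⟩ := hT2
        exact ⟨i, hiF, hx, hxU⟩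
    _ ≤ ∑ i ∈ F, ρ (t ∩ U i) := measure_biUnion_finset_le F _
    _ ≤ F.card • ρ (t ∩ U i₀) := Finset.sum_le_card_nsmul F _ _ (fun i hi => hmax i hi)
    _ = F.card * ρ (t ∩ U i₀) := nsmul_eq_mul _ _

lemma grid_pigeonhole (ρ : Measure (EuclideanSpace ℝ (Fin 2))) (a : EuclideanSpace ℝ (Fin 2))
    (h : ℝ) (N : ℕ) (hh : 0 < h) (hN : 0 < N) (t : Set (EuclideanSpace ℝ (Fin 2)))
    (ht : ∀ x ∈ t, ∀ i, a i ≤ x i ∧ x i ≤ a i + N * h) :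
    ∃ z : EuclideanSpace ℝ (Fin 2), (∀ i, a i ≤ z i ∧ z i + h ≤ a i + N * h) ∧
      ρ t ≤ (N ^ 2 : ℕ) * ρ (t ∩ square z h) := by
  set zf : ℕ × ℕ → EuclideanSpace ℝ (Fin 2) :=
    fun p => WithLp.toLp 2 (fun i => a i + (if i = 0 then p.1 else p.2) * h) with hzf
  have hcov : t ⊆ ⋃ p ∈ Finset.range N ×ˢ Finset.range N, square (zf p) h := by
    intro x hx
    obtain ⟨m0, hm0N, hm0l, hm0r⟩ := grid1 (a 0) h N hh hN (x 0) (ht x hx 0).1 (ht x hx 0).2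
    obtain ⟨m1, hm1N, hm1l, hm1r⟩ := grid1 (a 1) h N hh hN (x 1) (ht x hx 1).1 (ht x hx 1).2
    simp only [Set.mem_iUnion]
    refine ⟨(m0, m1), by simp [Finset.mem_product, hm0N, hm1N], fun i => ?_⟩
    fin_cases i
    · simpa [zf] using ⟨hm0l, by linarith⟩
    · simpa [zf] using ⟨hm1l, by linarith⟩
  obtain ⟨p, hpF, hple⟩ := measure_pigeonhole ρ _ (by
    refine Finset.nonempty_product.mpr ⟨?_, ?_⟩ <;> exact Finset.nonempty_range_iff.mpr hN.ne') _ _ hcov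
  refine ⟨zf p, ?_, ?_⟩
  · simp only [Finset.mem_product, Finset.mem_range] at hpF
    intro i
    have hc0 : (0:ℝ) ≤ ((if i = 0 then p.1 else p.2 : ℕ) : ℝ) := by positivity
    have hcN : ((if i = 0 then p.1 else p.2 : ℕ) : ℝ) + 1 ≤ (N:ℝ) := by
      split
      · exact_mod_cast Nat.succ_le_of_lt hpF.1
      · exact_mod_cast Nat.succ_le_of_lt hpF.2
    constructor
    · show a i ≤ a i + _ * h
      nlinarith
    · show a i + _ * h + h ≤ a i + (N:ℝ) * h
      nlinarith
  · have hcard : (Finset.range N ×ˢ Finset.range N).card = N ^ 2 := by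
      rw [Finset.card_product, Finset.card_range, sq]
    rw [hcard] at hple
    exact hple

lemma chain_cover {α : Type*} (A : ℕ → Set α) (n : ℕ) :
    A 0 ⊆ A n ∪ ⋃ k ∈ Finset.range n, (A k \ A (k + 1)) := by
  intro y hy
  by_contra hc
  simp only [Set.mem_union, Set.mem_iUnion, not_or, not_exists] at hc
  obtain ⟨h1, h2⟩ := hc
  have key : ∀ k, k ≤ n → y ∈ A k := by
    intro k hk
    induction k with
    | zero => exact hy
    | succ m ih =>
      have hm : y ∈ A m := ih (by omega)
      by_contra hnot
      exact h2 m (Finset.mem_range.mpr (by omega)) ⟨hm, hnot⟩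
  exact h1 (key n le_rfl)

lemma helper1 (m : ℝ≥0∞) (c : ℕ) (x : ℝ) (h1 : (1:ℝ≥0∞) ≤ c * m)
    (h2 : x ≤ (c:ℝ)⁻¹) : ENNReal.ofReal x ≤ m := by
  rcases Nat.eq_zero_or_pos c with rfl | hc
  · simp at h1
  by_contra hcon
  push_neg at hcon
  have hm : m < ENNReal.ofReal (c:ℝ)⁻¹ := lt_of_lt_of_le hcon (ENNReal.ofReal_le_ofReal h2)
  have hlt : (c:ℝ≥0∞) * m < c * ENNReal.ofReal (c:ℝ)⁻¹ :=
    (ENNReal.mul_lt_mul_iff_right (by exact_mod_cast hc.ne') (by simp)).mpr hm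
  have heq : (c:ℝ≥0∞) * ENNReal.ofReal (c:ℝ)⁻¹ = 1 := by
    rw [← ENNReal.ofReal_natCast, ← ENNReal.ofReal_mul (by positivity),
      mul_inv_cancel₀ (by positivity), ENNReal.ofReal_one]
  rw [heq] at hlt
  exact absurd (lt_of_le_of_lt h1 hlt) (lt_irrefl _)

lemma helper2 (m : ℝ≥0∞) (c : ℕ) (hc : 0 < c) (x : ℝ)
    (h1 : (1:ℝ≥0∞) ≤ ENNReal.ofReal (1/4) + c * m)
    (h2 : x ≤ ((2 * c : ℕ) : ℝ)⁻¹) : ENNReal.ofReal x ≤ m := by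
  by_contra hcon
  push_neg at hcon
  have hm : m < ENNReal.ofReal ((2 * (c:ℝ))⁻¹) := by
    refine lt_of_lt_of_le hcon (ENNReal.ofReal_le_ofReal ?_)
    push_cast at h2; exact h2
  have h3 : (c:ℝ≥0∞) * m < ENNReal.ofReal (1/2) := by
    calc (c:ℝ≥0∞) * m < c * ENNReal.ofReal ((2*(c:ℝ))⁻¹) :=
          (ENNReal.mul_lt_mul_iff_right (by exact_mod_cast hc.ne') (by simp)).mpr hm
      _ = ENNReal.ofReal ((c:ℝ) * (2*(c:ℝ))⁻¹) := by
          rw [ENNReal.ofReal_mul (by positivity), ENNReal.ofReal_natCast]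
      _ = ENNReal.ofReal (1/2) := by
          congr 1
          have hc' : (c:ℝ) ≠ 0 := by positivity
          field_simp
  have hfin : (1:ℝ≥0∞) < 1 := by
    calc (1:ℝ≥0∞) ≤ ENNReal.ofReal (1/4) + c * m := h1
      _ < ENNReal.ofReal (1/4) + ENNReal.ofReal (1/2) := ENNReal.add_lt_add_left (by simp) h3
      _ = ENNReal.ofReal (3/4) := by rw [← ENNReal.ofReal_add (by norm_num) (by norm_num)]; norm_num
      _ < 1 := ENNReal.ofReal_lt_one.mpr (by norm_num)
  exact absurd hfin (lt_irrefl _)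

/-- Any measure with an `s`-Frostman condition (constant `L`) on `[0,1)²` has two
well-separated squares of mass `≥ L^{-O_s(1)}` inside a common square. -/
theorem separated_squares (s : ℝ) (hs1 : 1 < s) (hs2 : s ≤ 2) :
    ∃ c > (0 : ℝ), ∃ C > (0 : ℝ), ∀ (L : ℝ), 1 ≤ L →
      ∀ ρ : Measure (EuclideanSpace ℝ (Fin 2)), IsProbabilityMeasure ρ →
        ρ unitBoxᶜ = 0 →
        (∀ (x : EuclideanSpace ℝ (Fin 2)) (r : ℝ), 0 < r →
          ρ (Metric.closedBall x r) ≤ ENNReal.ofReal (L * r ^ s)) →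
        ∃ (z z₁ z₂ : EuclideanSpace ℝ (Fin 2)) (l l₁ l₂ : ℝ),
          0 < l ∧ 0 < l₁ ∧ 0 < l₂ ∧
          square z₁ l₁ ⊆ square z l ∧ square z₂ l₂ ⊆ square z l ∧
          ENNReal.ofReal (L ^ (-C)) ≤ ρ (square z₁ l₁) ∧
          ENNReal.ofReal (L ^ (-C)) ≤ ρ (square z₂ l₂) ∧
          ∀ x ∈ square z₁ l₁, ∀ y ∈ square z₂ l₂, c * l ≤ dist x y := by
  refine ⟨1/25, by norm_num, 100, by norm_num, ?_⟩
  intro L hL ρ hprob hnull hfrost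
  have hL0 : (0:ℝ) < L := by linarith
  -- the unit box has full mass
  have hbox1 : (1:ℝ≥0∞) ≤ ρ unitBox := by
    have h1 : (1:ℝ≥0∞) = ρ Set.univ := measure_univ.symm
    have h2 : ρ Set.univ ≤ ρ unitBox + ρ unitBoxᶜ := by
      rw [← Set.union_compl_self unitBox]; exact measure_union_le _ _
    rw [hnull, add_zero] at h2
    exact h1 ▸ h2
  -- the Frostman condition forces L ≥ 4/3
  have hL43 : (4/3 : ℝ) ≤ L := by
    set ctr : EuclideanSpace ℝ (Fin 2) := WithLp.toLp 2 (fun _ => 1/2) with hctr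
    have h2 : unitBox ⊆ Metric.closedBall ctr (3/4) := by
      intro y hy
      rw [Metric.mem_closedBall, dist_comm]
      have hco : ∀ i, |ctr i - y i| ≤ 1/2 := by
        intro i
        have h := hy i
        simp only [hctr, PiLp.toLp_apply]
        rw [abs_le]
        constructor <;> [linarith [h.2]; linarith [h.1]]
      calc dist ctr y ≤ 3/2 * (1/2) := dist_le_coords _ _ _ hco
        _ ≤ 3/4 := by norm_num
    have h3 : (1:ℝ≥0∞) ≤ ENNReal.ofReal (L * (3/4)^s) :=
      le_trans hbox1 (le_trans (measure_mono h2) (hfrost ctr (3/4) (by norm_num)))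
    have h4 : (1:ℝ) ≤ L * (3/4)^s := by
      by_contra hcon
      push_neg at hcon
      exact absurd (lt_of_le_of_lt h3 (ENNReal.ofReal_lt_one.mpr hcon)) (lt_irrefl _)
    have h5 : ((3:ℝ)/4)^s ≤ 3/4 := by
      have h := Real.rpow_le_rpow_of_exponent_ge (x := (3:ℝ)/4) (by norm_num) (by norm_num)
        (le_of_lt hs1)
      rwa [Real.rpow_one] at h
    nlinarith [Real.rpow_nonneg (by norm_num : (0:ℝ) ≤ 3/4) s]
  have hLpow' : ∀ k:ℕ, (4/3:ℝ)^k ≤ L^k := fun k => pow_le_pow_left₀ (by norm_num) hL43 k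
  have hxpos : (0:ℝ) < L ^ (-(100:ℝ)) := Real.rpow_pos_of_pos hL0 _
  have hLpow : L ^ (-(100:ℝ)) = (L^(100:ℕ))⁻¹ := by
    rw [show ((100:ℝ)) = ((100:ℕ):ℝ) by norm_num, Real.rpow_neg hL0.le, Real.rpow_natCast]
  -- the number of scales
  set n : ℕ := ⌈Real.logb 4 (8*L)⌉₊ with hn
  have hlogpos : 0 < Real.logb 4 (8*L) := Real.logb_pos (by norm_num) (by linarith)
  have h4n : 8 * L ≤ (4:ℝ)^n := by
    have h1 := Nat.le_ceil (Real.logb 4 (8*L))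
    have h2 : (4:ℝ) ^ (Real.logb 4 (8*L)) ≤ (4:ℝ) ^ ((n:ℝ)) :=
      Real.rpow_le_rpow_of_exponent_le (by norm_num) (by exact_mod_cast h1)
    rwa [Real.rpow_logb (by norm_num) (by norm_num) (by linarith), Real.rpow_natCast] at h2
  have h4n' : (4:ℝ)^n ≤ 32 * L := by
    have h1 : ((n:ℝ)) < Real.logb 4 (8*L) + 1 := Nat.ceil_lt_add_one hlogpos.le
    have h2 : (4:ℝ) ^ ((n:ℝ)) ≤ (4:ℝ) ^ (Real.logb 4 (8*L) + 1) :=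
      Real.rpow_le_rpow_of_exponent_le (by norm_num) h1.le
    rw [Real.rpow_add (by norm_num), Real.rpow_logb (by norm_num) (by norm_num) (by linarith),
      Real.rpow_natCast, Real.rpow_one] at h2
    linarith
  have hn1 : 1 ≤ n := Nat.one_le_ceil_iff.mpr hlogpos
  have hnL : (n:ℝ) ≤ 9 * L := by
    have h1 : ((n:ℝ)) < Real.logb 4 (8*L) + 1 := Nat.ceil_lt_add_one hlogpos.le
    have h2 : Real.logb 4 (8*L) ≤ Real.log (8*L) := by
      rw [Real.logb]
      have hl4 : 1 ≤ Real.log 4 := by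
        rw [Real.le_log_iff_exp_le (by norm_num)]
        exact le_trans Real.exp_one_lt_d9.le (by norm_num)
      exact div_le_self (Real.log_nonneg (by linarith)) hl4
    have h3 : Real.log (8*L) ≤ 8*L - 1 := Real.log_le_sub_one_of_pos (by linarith)
    linarith
  have h4npos : (0:ℝ) < (4:ℝ)^n := by positivity
  set rn : ℝ := ((4:ℝ)^n)⁻¹ with hrn
  have hrnpos : 0 < rn := by rw [hrn]; positivity
  clear_value rn
  have hrn8 : rn ≤ 1/8 := by
    rw [hrn, show (1:ℝ)/8 = (8:ℝ)⁻¹ by norm_num]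
    exact inv_anti₀ (by norm_num) (by linarith)
  -- first grid: a heavy small square in the unit box
  set a0 : EuclideanSpace ℝ (Fin 2) := WithLp.toLp 2 (fun _ => 0) with ha0
  clear_value a0
  have hNh : ((4^n : ℕ) : ℝ) * rn = 1 := by
    push_cast
    rw [hrn]
    field_simp
  obtain ⟨z₁, hz₁b, hz₁m⟩ := grid_pigeonhole ρ a0 rn (4^n) hrnpos (by positivity) unitBox (by
    intro x hx i
    have h := hx i
    constructor
    · simpa [ha0] using h.1
    · simp only [ha0, PiLp.toLp_apply]
      rw [zero_add, hNh]
      exact h.2.le)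
  have hQ1 : (1:ℝ≥0∞) ≤ ((4^n)^2 : ℕ) * ρ (unitBox ∩ square z₁ rn) := le_trans hbox1 hz₁m
  have key1 : (((4^n)^2 : ℕ):ℝ) ≤ L^(100:ℕ) := by
    push_cast
    have h3 : (1024:ℝ) ≤ L^98 := le_trans (by norm_num : (1024:ℝ) ≤ (4/3:ℝ)^98) (hLpow' 98)
    calc ((4:ℝ)^n)^2 ≤ (32*L)^2 := by nlinarith
      _ = 1024 * L^2 := by ring
      _ ≤ L^98 * L^2 := by nlinarith [pow_pos hL0 2]
      _ = L^100 := by ring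
  have hm1 : ENNReal.ofReal (L ^ (-(100:ℝ))) ≤ ρ (unitBox ∩ square z₁ rn) := by
    apply helper1 _ ((4^n)^2) _ hQ1
    rw [hLpow]
    exact inv_anti₀ (by positivity) key1
  -- the center point
  set xc : EuclideanSpace ℝ (Fin 2) := WithLp.toLp 2 (fun i => z₁ i + rn/2) with hxc
  clear_value xc
  have hxcb : ∀ i, 0 ≤ xc i ∧ xc i ≤ 1 := by
    intro i
    have h := hz₁b i
    simp only [ha0, PiLp.toLp_apply] at h
    have h2 : z₁ i + rn ≤ 1 := by
      have := h.2
      rw [zero_add, hNh] at this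
      linarith
    constructor
    · simp only [hxc, PiLp.toLp_apply]; linarith [h.1]
    · simp only [hxc, PiLp.toLp_apply]; linarith
  -- the chain of balls
  set A : ℕ → Set (EuclideanSpace ℝ (Fin 2)) :=
    fun j => Metric.closedBall xc (2 * ((4:ℝ)^j)⁻¹) with hA
  clear_value A
  have hA0 : (1:ℝ≥0∞) ≤ ρ (A 0) := by
    refine le_trans hbox1 (measure_mono ?_)
    intro y hy
    simp only [hA, Metric.mem_closedBall]
    have hco : ∀ i, |y i - xc i| ≤ 1 := by
      intro i
      have h1 := hy i; have h2 := hxcb i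
      rw [abs_le]; constructor <;> linarith [h1.1, h1.2, h2.1, h2.2]
    calc dist y xc ≤ 3/2 * 1 := dist_le_coords _ _ _ hco
      _ ≤ 2 * ((4:ℝ)^(0:ℕ))⁻¹ := by norm_num
  have hAn : ρ (A n) ≤ ENNReal.ofReal (1/4) := by
    simp only [hA]
    have hr2 : (0:ℝ) < 2 * ((4:ℝ)^n)⁻¹ := by positivity
    refine le_trans (hfrost xc _ hr2) (ENNReal.ofReal_le_ofReal ?_)
    have hb1 : 2 * ((4:ℝ)^n)⁻¹ ≤ 1 := by rw [← hrn]; linarith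
    have hbs : (2 * ((4:ℝ)^n)⁻¹) ^ s ≤ 2 * ((4:ℝ)^n)⁻¹ := by
      have h := Real.rpow_le_rpow_of_exponent_ge hr2 hb1 (le_of_lt hs1)
      rwa [Real.rpow_one] at h
    have h9 : rn ≤ (8*L)⁻¹ := by
      rw [hrn]; exact inv_anti₀ (by linarith) h4n
    have h11 : L * (2 * (8*L)⁻¹) = 1/4 := by field_simp; ring
    calc L * (2*((4:ℝ)^n)⁻¹)^s ≤ L * (2*((4:ℝ)^n)⁻¹) := by nlinarith
      _ = L * (2 * rn) := by rw [← hrn]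
      _ ≤ L * (2 * (8*L)⁻¹) := by nlinarith
      _ = 1/4 := h11
  -- telescoping and pigeonhole over scales
  have hchain : (1:ℝ≥0∞) ≤ ENNReal.ofReal (1/4) + ∑ j ∈ Finset.range n, ρ (A j \ A (j+1)) := by
    calc (1:ℝ≥0∞) ≤ ρ (A 0) := hA0
      _ ≤ ρ (A n ∪ ⋃ j ∈ Finset.range n, (A j \ A (j+1))) := measure_mono (chain_cover A n)
      _ ≤ ρ (A n) + ρ (⋃ j ∈ Finset.range n, (A j \ A (j+1))) := measure_union_le _ _
      _ ≤ ENNReal.ofReal (1/4) + ∑ j ∈ Finset.range n, ρ (A j \ A (j+1)) :=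
          add_le_add hAn (measure_biUnion_finset_le _ _)
  obtain ⟨k, hkmem, hkmax⟩ := Finset.exists_max_image (Finset.range n)
    (fun j => ρ (A j \ A (j+1))) (Finset.nonempty_range_iff.mpr (by omega))
  have hkn : k < n := Finset.mem_range.mp hkmem
  have hmain : (1:ℝ≥0∞) ≤ ENNReal.ofReal (1/4) + (n:ℝ≥0∞) * ρ (A k \ A (k+1)) := by
    refine le_trans hchain (add_le_add_right ?_ _)
    calc ∑ j ∈ Finset.range n, ρ (A j \ A (j+1))
        ≤ (Finset.range n).card • ρ (A k \ A (k+1)) := Finset.sum_le_card_nsmul _ _ _ hkmax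
      _ = (n:ℝ≥0∞) * ρ (A k \ A (k+1)) := by rw [Finset.card_range, nsmul_eq_mul]
  -- second grid: a heavy square within the annulus
  set r : ℝ := ((4:ℝ)^k)⁻¹ with hr
  have hrpos : 0 < r := by rw [hr]; positivity
  clear_value r
  have hr4 : ((4:ℝ)^(k+1))⁻¹ = r/4 := by
    rw [pow_succ, mul_inv, ← hr]; ring
  have hrnr : rn ≤ r / 4 := by
    have h1 : (4:ℝ)^(k+1) ≤ (4:ℝ)^n := pow_le_pow_right₀ (by norm_num) (by omega)
    have h2 : rn ≤ ((4:ℝ)^(k+1))⁻¹ := by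
      rw [hrn]; exact inv_anti₀ (by positivity) h1
    linarith [hr4 ▸ h2]
  obtain ⟨z₂, hz₂b, hz₂m⟩ := grid_pigeonhole ρ (WithLp.toLp 2 (fun i => xc i - 2*r)) (r/32) 128
    (by positivity) (by norm_num) (A k \ A (k+1)) (by
      intro y hy i
      have hd : dist y xc ≤ 2*r := by
        have h := hy.1
        simp only [hA, Metric.mem_closedBall] at h
        rw [hr]
        exact h
      have hco := abs_le.mp (le_trans (coord_le_dist y xc i) hd)
      constructor
      · dsimp only; linarith [hco.1]
      · dsimp only; push_cast; linarith [hco.2])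
  have hcomb : (1:ℝ≥0∞) ≤ ENNReal.ofReal (1/4) +
      ((16384 * n : ℕ):ℝ≥0∞) * ρ ((A k \ A (k+1)) ∩ square z₂ (r/32)) := by
    refine le_trans hmain (add_le_add_right ?_ _)
    calc (n:ℝ≥0∞) * ρ (A k \ A (k+1))
        ≤ (n:ℝ≥0∞) * (((128^2:ℕ):ℝ≥0∞) * ρ ((A k \ A (k+1)) ∩ square z₂ (r/32))) :=
          mul_le_mul_right hz₂m _
      _ = ((16384 * n : ℕ):ℝ≥0∞) * ρ ((A k \ A (k+1)) ∩ square z₂ (r/32)) := by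
          push_cast; ring
  have hnpos : (0:ℝ) < (n:ℝ) := by exact_mod_cast hn1
  have key2 : L ^ (-(100:ℝ)) ≤ ((2 * (16384*n) : ℕ):ℝ)⁻¹ := by
    rw [hLpow]
    push_cast
    apply inv_anti₀ (by positivity)
    have h2 : (294912:ℝ) ≤ L^99 := le_trans (by norm_num : (294912:ℝ) ≤ (4/3:ℝ)^99) (hLpow' 99)
    calc (2:ℝ)*(16384*(n:ℝ)) ≤ 294912 * L := by nlinarith
      _ ≤ L^99 * L := by nlinarith
      _ = L^100 := by ring
  have hm₂ge : ENNReal.ofReal (L ^ (-(100:ℝ))) ≤ ρ ((A k \ A (k+1)) ∩ square z₂ (r/32)) :=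
    helper2 _ (16384*n) (by omega) _ hcomb key2
  -- the annulus point
  have hm₂pos : ρ ((A k \ A (k+1)) ∩ square z₂ (r/32)) ≠ 0 :=
    (lt_of_lt_of_le (ENNReal.ofReal_pos.mpr hxpos) hm₂ge).ne'
  obtain ⟨b, hb⟩ := nonempty_of_measure_ne_zero hm₂pos
  have hb1 : b ∈ A k \ A (k+1) := hb.1
  have hb2 : ∀ i, z₂ i ≤ b i ∧ b i ≤ z₂ i + r/32 := hb.2
  have hbxc : r/2 < dist b xc := by
    have h := hb1.2
    simp only [hA, Metric.mem_closedBall, not_le] at h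
    rw [hr4] at h
    linarith
  have hbxc2 : dist b xc ≤ 2*r := by
    have h := hb1.1
    simp only [hA, Metric.mem_closedBall] at h
    rw [hr]
    exact h
  -- final assembly
  refine ⟨(WithLp.toLp 2 (fun i => xc i - 5*r/2)), z₁, z₂, 5*r, rn, r/32,
    by linarith, hrnpos, by linarith, ?_, ?_, ?_, ?_, ?_⟩
  · -- square z₁ rn ⊆ big square
    intro p hp
    have hp' : ∀ i, z₁ i ≤ p i ∧ p i ≤ z₁ i + rn := hp
    intro i
    have h := hp' i
    have hxci : xc i = z₁ i + rn/2 := by rw [hxc]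
    dsimp only
    constructor
    · rw [hxci]; linarith
    · rw [hxci]; linarith
  · -- square z₂ (r/32) ⊆ big square
    intro q hq
    have hq' : ∀ i, z₂ i ≤ q i ∧ q i ≤ z₂ i + r/32 := hq
    intro i
    have h1 := hq' i
    have h2 := hb2 i
    have h3 := abs_le.mp (le_trans (coord_le_dist b xc i) hbxc2)
    dsimp only
    constructor
    · linarith
    · linarith
  · exact le_trans hm1 (measure_mono Set.inter_subset_right)
  · exact le_trans hm₂ge (measure_mono Set.inter_subset_right)
  · -- separation
    intro p hp q hq
    have hp' : ∀ i, z₁ i ≤ p i ∧ p i ≤ z₁ i + rn := hp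
    have hq' : ∀ i, z₂ i ≤ q i ∧ q i ≤ z₂ i + r/32 := hq
    have hpd : dist p xc ≤ 3/2 * (rn/2) := by
      apply dist_le_coords
      intro i
      have h := hp' i
      have hxci : xc i = z₁ i + rn/2 := by rw [hxc]
      rw [abs_le, hxci]
      constructor <;> linarith
    have hqb : dist q b ≤ 3/2 * (r/32) := by
      apply dist_le_coords
      intro i
      have h1 := hq' i
      have h2 := hb2 i
      rw [abs_le]
      constructor <;> linarith
    have htri : dist b xc ≤ dist b q + dist q p + dist p xc := dist_triangle4 b q p xc
    have he1 : dist b q = dist q b := dist_comm b q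
    have he2 : dist q p = dist p q := dist_comm q p
    rw [he1, he2] at htri
    have : (1:ℝ)/25 * (5*r) = r/5 := by ring
    linarith
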